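/- Let μ > 0 and Λ ∈ ℂ with Im Λ > 0, and define the (maximal) Jacobi operator J(Λ;μ) on ℓ²(ℕ₀) by (J(Λ;μ)C)_n = d_{n+1}C_{n+1} + 2μ y_n(Λ) C_n + d_n C_{n−1}, where d_n = n^{1/2}(n²−1/4)^{1/4} and y_n(Λ) = (n+1/2)^{1/2}√(n+1/2−Λ) (branch with Re > 0, analytic off [n+1/2,∞)). Then for every C ∈ Dom J(Λ;μ) that is finitely supported, Im⟨J(Λ;μ)C, C⟩ ≤ −δ(Λ)‖C‖² for some δ(Λ) > 0 depending only on Λ and μ; in particular J(Λ;μ) has trivial kernel on finitely supported sequences. -/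

import Mathlib

/-- Off-diagonal Jacobi entries `d_n = n^{1/2}(n²−1/4)^{1/4}` (so `d_0 = 0`). -/
noncomputable def dEnt (n : ℕ) : ℝ :=
  Real.sqrt n * ((n : ℝ) ^ 2 - 1 / 4) ^ ((1 : ℝ) / 4)

/-- `ζ_n(Λ) = √(n + 1/2 − Λ)`, principal branch of the square root. -/
noncomputable def zeta (n : ℕ) (Λ : ℂ) : ℂ := ((n : ℂ) + 1 / 2 - Λ) ^ ((1 : ℂ) / 2)

/-- `y_n(Λ) = (n+1/2)^{1/2} ζ_n(Λ)`. -/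
noncomputable def yEnt (n : ℕ) (Λ : ℂ) : ℂ :=
  ((Real.sqrt ((n : ℝ) + 1 / 2) : ℝ) : ℂ) * zeta n Λ

/-- The Jacobi operator `J(Λ;μ)` applied to a sequence. -/
noncomputable def JLam (Λ : ℂ) (μ : ℝ) (C : ℕ → ℂ) (n : ℕ) : ℂ :=
  (dEnt (n + 1) : ℂ) * C (n + 1) + 2 * (μ : ℂ) * yEnt n Λ * C n
    + (dEnt n : ℂ) * C (n - 1)

lemma sqrt_im_neg {w : ℂ} (hw : w.im < 0) :
    (w ^ ((1:ℂ)/2)).im < 0 ∧ ((w ^ ((1:ℂ)/2)).im)^2 = (‖w‖ - w.re) / 2 := by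
  have hw0 : w ≠ 0 := by
    intro h; rw [h] at hw; simp at hw
  have habs : 0 < ‖w‖ := norm_pos_iff.mpr hw0
  have harg_neg : Complex.arg w < 0 := Complex.arg_neg_iff.mpr hw
  have harg_gt : -Real.pi < Complex.arg w := Complex.neg_pi_lt_arg w
  have hdef : w ^ ((1:ℂ)/2) = Complex.exp (Complex.log w * ((1:ℂ)/2)) :=
    Complex.cpow_def_of_ne_zero hw0 _
  have him : (w ^ ((1:ℂ)/2)).im
      = Real.exp (Real.log (‖w‖) / 2) * Real.sin (Complex.arg w / 2) := by
    rw [hdef, Complex.exp_im]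
    congr 1
    · congr 1
      simp [Complex.mul_re, Complex.log_re, Complex.log_im]
      ring
    · congr 1
      simp [Complex.mul_im, Complex.log_re, Complex.log_im]
      ring
  have hE : Real.exp (Real.log (‖w‖) / 2) = Real.sqrt (‖w‖) := by
    rw [Real.sqrt_eq_rpow, Real.rpow_def_of_pos habs]
    ring_nf
  have hsin : Real.sin (Complex.arg w / 2) < 0 :=
    Real.sin_neg_of_neg_of_neg_pi_lt (by linarith) (by nlinarith [Real.pi_pos])
  constructor
  · rw [him, hE]
    exact mul_neg_of_pos_of_neg (Real.sqrt_pos.mpr habs) hsin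
  · rw [him, hE, mul_pow, Real.sq_sqrt habs.le, Real.sin_sq_eq_half_sub]
    rw [mul_div_cancel₀ _ (two_ne_zero), Complex.cos_arg hw0]
    field_simp

set_option maxHeartbeats 1000000 in
lemma yEnt_im_le (Λ : ℂ) (hΛ : 0 < Λ.im) (n : ℕ) :
    (yEnt n Λ).im ≤ -(Λ.im / Real.sqrt (4 + 8 * ‖Λ‖)) := by
  set t := Λ.im with ht
  set R := ‖Λ‖ with hR
  have hR0 : 0 ≤ R := norm_nonneg Λ
  set a : ℝ := (n : ℝ) + 1/2 with ha
  have ha2 : (1:ℝ)/2 ≤ a := by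
    have h0 : (0:ℝ) ≤ (n:ℝ) := Nat.cast_nonneg n
    rw [ha]; linarith
  set w : ℂ := (n : ℂ) + 1/2 - Λ with hwdef
  have hwre : w.re = a - Λ.re := by simp [hwdef, ha]
  have hwim : w.im = -t := by simp [hwdef, t]
  have hwimneg : w.im < 0 := by rw [hwim]; linarith
  obtain ⟨hz_neg, hz_sq⟩ := sqrt_im_neg hwimneg
  have hzeta : zeta n Λ = w ^ ((1:ℂ)/2) := rfl
  clear_value a w t R
  -- y im
  have hy_im : (yEnt n Λ).im = Real.sqrt a * (zeta n Λ).im := by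
    rw [yEnt, Complex.im_ofReal_mul, ha]
  have hsa : 0 < Real.sqrt a := Real.sqrt_pos.mpr (by linarith)
  have hy_neg : (yEnt n Λ).im < 0 := by
    rw [hy_im, hzeta]; exact mul_neg_of_pos_of_neg hsa hz_neg
  -- |w| bounds
  have habs_le : ‖w‖ ≤ a + R := by
    rw [hwdef]
    refine le_trans (norm_sub_le _ _) ?_
    have h : (n:ℂ) + 1/2 = ((a : ℝ) : ℂ) := by push_cast [ha]; ring
    rw [h, Complex.norm_real, Real.norm_eq_abs, abs_of_nonneg (by linarith), hR]
  have habs_pos : 0 < ‖w‖ := by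
    refine norm_pos_iff.mpr ?_
    intro h; rw [h] at hwimneg; simp at hwimneg
  have hre_le : |w.re| ≤ ‖w‖ := Complex.abs_re_le_norm w
  -- (im ζ)^2 = (|w| - re w)/2, and |w|^2 - re^2 = t^2
  have hsq_id : (‖w‖)^2 = w.re^2 + t^2 := by
    have := Complex.sq_norm w
    rw [Complex.normSq_apply] at this
    rw [this, hwim]; ring
  -- lower bound for (|w| - re w)
  have hkey : t^2 / (2 * (a + R)) ≤ ‖w‖ - w.re := by
    have hsum_pos : 0 < ‖w‖ + w.re := by
      rcases lt_or_ge 0 (‖w‖ + w.re) with h | h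
      · exact h
      · exfalso
        have h1 : ‖w‖ ≤ -w.re := by linarith
        have h2 : (‖w‖)^2 ≤ w.re^2 := by nlinarith [abs_nonneg w.re, neg_abs_le w.re]
        nlinarith
    have hfac : (‖w‖ - w.re) * (‖w‖ + w.re) = t^2 := by nlinarith
    have hsum_le : ‖w‖ + w.re ≤ 2 * (a + R) := by
      have := hre_le
      have := abs_le.mp hre_le
      linarith
    rw [div_le_iff₀ (by linarith)]
    calc t^2 = (‖w‖ - w.re) * (‖w‖ + w.re) := hfac.symm
    _ ≤ (‖w‖ - w.re) * (2 * (a + R)) := by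
        apply mul_le_mul_of_nonneg_left hsum_le
        nlinarith
  -- so (y im)^2 ≥ a * t^2/(4(a+R)) ≥ t^2/(4+8R)
  have hy_sq : ((yEnt n Λ).im)^2 = a * ((‖w‖ - w.re)/2) := by
    rw [hy_im, hzeta, mul_pow, Real.sq_sqrt (by linarith), hz_sq]
  have haR : 0 < a + R := by linarith
  have hy_sq_ge : t^2 / (4 + 8*R) ≤ ((yEnt n Λ).im)^2 := by
    rw [hy_sq]
    have h1 : a * (t^2 / (2*(a+R)) / 2) ≤ a * ((‖w‖ - w.re)/2) := by
      apply mul_le_mul_of_nonneg_left _ (by linarith)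
      linarith
    refine le_trans ?_ h1
    have ht2 : 0 ≤ t^2 := sq_nonneg t
    have hne : a + R ≠ 0 := ne_of_gt haR
    have expand : a * (t ^ 2 / (2 * (a + R)) / 2) = a * t^2 / (4*(a+R)) := by
      field_simp; ring
    rw [expand, div_le_div_iff₀ (by linarith) (by linarith)]
    have hfinal : 0 ≤ 4 * (R * t^2) * (2*a - 1) :=
      mul_nonneg (mul_nonneg (by norm_num) (mul_nonneg hR0 ht2)) (by linarith)
    nlinarith [hfinal]
  -- conclude
  obtain ⟨δ, hδ⟩ : ∃ δ:ℝ, δ = t / Real.sqrt (4+8*R) := ⟨_, rfl⟩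
  have hs4 : 0 < Real.sqrt (4+8*R) := Real.sqrt_pos.mpr (by linarith)
  have hδpos : 0 < δ := by rw [hδ]; exact div_pos hΛ hs4
  have hδsq : δ^2 = t^2/(4+8*R) := by rw [hδ, div_pow, Real.sq_sqrt (by linarith)]
  have h2 : δ ≤ -(yEnt n Λ).im := by
    nlinarith [hy_neg, hδpos, hy_sq_ge, hδsq, sq_nonneg (δ + (yEnt n Λ).im)]
  rw [← hδ]
  linarith


lemma dEnt_zero : dEnt 0 = 0 := by simp [dEnt]

lemma im_expand (d1 d2 m : ℝ) (y u v c : ℂ) :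
    (((d1:ℂ)*u + 2*(m:ℂ)*y*c + (d2:ℂ)*v) * (starRingEnd ℂ) c).im
      = d1 * (u * (starRingEnd ℂ) c).im + 2*m*y.im*(Complex.normSq c)
        + d2 * (v * (starRingEnd ℂ) c).im := by
  simp only [add_mul, Complex.add_im, Complex.add_re, Complex.mul_im, Complex.mul_re,
    Complex.ofReal_re, Complex.ofReal_im, Complex.conj_re, Complex.conj_im,
    Complex.normSq_apply, Complex.re_ofNat, Complex.im_ofNat]
  ring

/-- For `Im Λ > 0` the operator `J(Λ;μ)` is strictly dissipative on finitely
supported sequences: `Im⟨J(Λ;μ)C, C⟩ ≤ −δ‖C‖²` for some `δ = δ(Λ,μ) > 0`;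
in particular it has trivial kernel there. -/
theorem JLam_dissipative (μ : ℝ) (hμ : 0 < μ) (Λ : ℂ) (hΛ : 0 < Λ.im) :
    (∃ δ : ℝ, 0 < δ ∧ ∀ C : ℕ → ℂ, (Function.support C).Finite →
      (∑' n, JLam Λ μ C n * (starRingEnd ℂ) (C n)).im ≤ -δ * ∑' n, ‖C n‖ ^ 2) ∧
    (∀ C : ℕ → ℂ, (Function.support C).Finite → (∀ n, JLam Λ μ C n = 0) → C = 0) := by
  have hR0 : (0:ℝ) ≤ ‖Λ‖ := norm_nonneg Λ
  set δ0 := Λ.im / Real.sqrt (4 + 8 * ‖Λ‖) with hδ0def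
  have hδ0 : 0 < δ0 := div_pos hΛ (Real.sqrt_pos.mpr (by linarith))
  have hy : ∀ n, (yEnt n Λ).im ≤ -δ0 := yEnt_im_le Λ hΛ
  set δ := 2*μ*δ0 with hδdef
  have hδ : 0 < δ := by positivity
  clear_value δ0 δ
  have key : ∀ C : ℕ → ℂ, (Function.support C).Finite →
      (∑' n, JLam Λ μ C n * (starRingEnd ℂ) (C n)).im ≤ -δ * ∑' n, ‖C n‖ ^ 2 := by
    intro C hC
    obtain ⟨N, hN⟩ : ∃ N, ∀ n, N ≤ n → C n = 0 := by
      refine ⟨(hC.toFinset.sup id) + 1, fun n hn => ?_⟩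
      by_contra h
      have hmem : n ∈ hC.toFinset := hC.mem_toFinset.mpr h
      have := Finset.le_sup (f := id) hmem
      simp only [id] at this
      omega
    have h1 : (∑' n, JLam Λ μ C n * (starRingEnd ℂ) (C n))
        = ∑ n ∈ Finset.range (N+1), JLam Λ μ C n * (starRingEnd ℂ) (C n) := by
      refine tsum_eq_sum (fun n hn => ?_)
      have hCn : C n = 0 := hN n (by simp only [Finset.mem_range] at hn; omega)
      simp [hCn]
    have h2 : (∑' n, ‖C n‖^2) = ∑ n ∈ Finset.range (N+1), ‖C n‖^2 := by
      refine tsum_eq_sum (fun n hn => ?_)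
      have hCn : C n = 0 := hN n (by simp only [Finset.mem_range] at hn; omega)
      simp [hCn]
    rw [h1, h2, Complex.im_sum]
    have hterm : ∀ n, (JLam Λ μ C n * (starRingEnd ℂ) (C n)).im
        = dEnt (n+1) * (C (n+1) * (starRingEnd ℂ) (C n)).im
          + 2*μ*(yEnt n Λ).im * Complex.normSq (C n)
          + dEnt n * (C (n-1) * (starRingEnd ℂ) (C n)).im := fun n =>
      im_expand (dEnt (n+1)) (dEnt n) μ (yEnt n Λ) (C (n+1)) (C (n-1)) (C n)
    calc (∑ n ∈ Finset.range (N+1), (JLam Λ μ C n * (starRingEnd ℂ) (C n)).im)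
        = (∑ n ∈ Finset.range (N+1), dEnt (n+1) * (C (n+1) * (starRingEnd ℂ) (C n)).im)
          + (∑ n ∈ Finset.range (N+1), 2*μ*(yEnt n Λ).im * Complex.normSq (C n))
          + (∑ n ∈ Finset.range (N+1), dEnt n * (C (n-1) * (starRingEnd ℂ) (C n)).im) := by
            rw [← Finset.sum_add_distrib, ← Finset.sum_add_distrib]
            exact Finset.sum_congr rfl (fun n _ => hterm n)
      _ = ∑ n ∈ Finset.range (N+1), 2*μ*(yEnt n Λ).im * Complex.normSq (C n) := by
            have hAsum : ∑ n ∈ Finset.range (N+1),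
                dEnt (n+1) * (C (n+1) * (starRingEnd ℂ) (C n)).im
                = ∑ k ∈ Finset.range N, dEnt (k+1) * (C (k+1) * (starRingEnd ℂ) (C k)).im := by
              rw [Finset.sum_range_succ]
              have hCN : C N = 0 := hN N le_rfl
              simp [hCN]
            have hBsum : ∑ n ∈ Finset.range (N+1),
                dEnt n * (C (n-1) * (starRingEnd ℂ) (C n)).im
                = -∑ k ∈ Finset.range N, dEnt (k+1) * (C (k+1) * (starRingEnd ℂ) (C k)).im := by
              rw [Finset.sum_range_succ']
              simp only [dEnt_zero, zero_mul, add_zero, Nat.add_sub_cancel]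
              rw [← Finset.sum_neg_distrib]
              refine Finset.sum_congr rfl (fun k _ => ?_)
              have hconj : C k * (starRingEnd ℂ) (C (k+1))
                  = (starRingEnd ℂ) (C (k+1) * (starRingEnd ℂ) (C k)) := by
                rw [map_mul, Complex.conj_conj, mul_comm]
              rw [hconj, Complex.conj_im]
              ring
            rw [hAsum, hBsum]
            ring
      _ ≤ ∑ n ∈ Finset.range (N+1), -δ * ‖C n‖^2 := by
            refine Finset.sum_le_sum (fun n _ => ?_)
            have hns : Complex.normSq (C n) = ‖C n‖^2 := by
              rw [← Complex.sq_norm]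
            rw [hns, hδdef]
            have h1 : 0 ≤ ‖C n‖^2 := by positivity
            have h3 : (yEnt n Λ).im * ‖C n‖^2 ≤ -δ0 * ‖C n‖^2 :=
              mul_le_mul_of_nonneg_right (hy n) h1
            have h4 := mul_le_mul_of_nonneg_left h3 (le_of_lt (by linarith : (0:ℝ) < 2*μ))
            linarith [h4]
      _ = -δ * ∑ n ∈ Finset.range (N+1), ‖C n‖^2 := by rw [Finset.mul_sum]
  refine ⟨⟨δ, hδ, key⟩, ?_⟩
  intro C hC hker
  have h0 : (∑' n, JLam Λ μ C n * (starRingEnd ℂ) (C n)).im = 0 := by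
    simp [hker]
  have hS := key C hC
  rw [h0] at hS
  have hSsum : (∑' n, ‖C n‖^2) = ∑ n ∈ hC.toFinset, ‖C n‖^2 := by
    refine tsum_eq_sum (fun n hn => ?_)
    have : C n = 0 := by
      by_contra h
      exact hn (hC.mem_toFinset.mpr h)
    simp [this]
  have hnonneg : ∀ n ∈ hC.toFinset, (0:ℝ) ≤ ‖C n‖^2 := fun n _ => by positivity
  have hle : ∑ n ∈ hC.toFinset, ‖C n‖^2 ≤ 0 := by
    rw [hSsum] at hS
    nlinarith [Finset.sum_nonneg hnonneg]
  have hzero : ∀ n ∈ hC.toFinset, ‖C n‖^2 = 0 := by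
    rw [← Finset.sum_eq_zero_iff_of_nonneg hnonneg]
    exact le_antisymm hle (Finset.sum_nonneg hnonneg)
  funext n
  by_contra h
  have hmem : n ∈ hC.toFinset := hC.mem_toFinset.mpr h
  have := hzero n hmem
  simp at this
  exact h this
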